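/- For every positive divisor d of m, let π_d : Σ[ρ] → Σ[X]/(Φ_d(X)) be the Σ-algebra homomorphism determined by sending the chosen generator t of ρ to the class of X (well defined since X^m − 1 maps to 0 in Σ[X]/(Φ_d(X))). Then π_m(e_prim) = 1, while π_d(e_prim) = 0 for every proper divisor d of m. -/

import Mathlib

open MonoidAlgebra Polynomial

/-- The averaging element `e_{ρ'} = (1/|ρ'|)·∑_{h ∈ ρ'} h` of the group algebra `Σ[ρ]`
associated to a subgroup `ρ'` of the finite group `ρ`. -/
noncomputable def avgIdem (S : Type*) [CommRing S] {ρ : Type*} [CommGroup ρ] [Fintype ρ]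
    (ρ' : Subgroup ρ) : MonoidAlgebra S ρ :=
  haveI : Fintype ρ' := Fintype.ofFinite ρ'
  Ring.inverse ((Nat.card ρ' : S)) • ∑ h : ρ', MonoidAlgebra.of S ρ (h : ρ)

/-- The primitive idempotent `e_prim = ∏_{p ∣ m prime} (1 − e_{ρ_p})` of the group algebra
`Σ[ρ]` of a cyclic group `ρ` of order `m` with chosen generator `t`; here `ρ_p` is the
unique subgroup of prime order `p`, namely the one generated by `t^(m/p)`. -/
noncomputable def primIdem (S : Type*) [CommRing S] {ρ : Type*} [CommGroup ρ] [Fintype ρ]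
    (m : ℕ) (t : ρ) : MonoidAlgebra S ρ :=
  ∏ p ∈ m.primeFactors, (1 - avgIdem S (Subgroup.zpowers (t ^ (m / p))))

lemma aux_cyclotomic_dvd_geom_sum_pow (S : Type*) [CommRing S] {m p : ℕ} (hm : 0 < m)
    (hp : p.Prime) (hpm : p ∣ m) :
    cyclotomic m S ∣ ∑ i ∈ Finset.range p, ((X : S[X]) ^ (m / p)) ^ i := by
  suffices h : cyclotomic m ℤ ∣ ∑ i ∈ Finset.range p, ((X : ℤ[X]) ^ (m / p)) ^ i by
    have := map_dvd (Polynomial.mapRingHom (Int.castRingHom S)) h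
    simpa [map_cyclotomic, Polynomial.map_pow] using this
  set q := m / p with hq
  have hq0 : 0 < q := Nat.div_pos (Nat.le_of_dvd hm hpm) hp.pos
  have hqm : q * p = m := Nat.div_mul_cancel hpm
  have hqlt : q < m := Nat.div_lt_self hm hp.one_lt
  have hmem : q ∈ m.properDivisors := Nat.mem_properDivisors.mpr ⟨⟨p, hqm.symm⟩, hqlt⟩
  have hA := X_pow_sub_one_mul_prod_cyclotomic_eq_X_pow_sub_one_of_dvd ℤ (Nat.mem_properDivisors.mp hmem).1 hm.ne'
  have hB : (∑ i ∈ Finset.range p, ((X : ℤ[X]) ^ q) ^ i) * ((X : ℤ[X]) ^ q - 1)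
      = X ^ m - 1 := by
    rw [geom_sum_mul, ← pow_mul, hqm]
  have hXq : ((X : ℤ[X]) ^ q - 1) ≠ 0 := by
    have h1 : ((X : ℤ[X]) ^ q - 1) = X ^ q - C 1 := by rw [map_one]
    rw [h1]
    exact (monic_X_pow_sub_C (1 : ℤ) hq0.ne').ne_zero
  have hkey : (∑ i ∈ Finset.range p, ((X : ℤ[X]) ^ q) ^ i)
      = ∏ x ∈ m.divisors \ q.divisors, cyclotomic x ℤ :=
    mul_right_cancel₀ hXq (by rw [hB, ← hA, mul_comm])
  rw [hkey]
  apply Finset.dvd_prod_of_mem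
  rw [Finset.mem_sdiff]
  refine ⟨Nat.mem_divisors_self m hm.ne', fun h => ?_⟩
  exact absurd (Nat.le_of_dvd hq0 (Nat.mem_divisors.mp h).1) (not_le.mpr hqlt)

/-- For each positive divisor `d` of `m` there is a unique `Σ`-algebra homomorphism
`π_d : Σ[ρ] → Σ[X]/(Φ_d(X))` sending the chosen generator `t` of `ρ` to the class of `X`;
it satisfies `π_m(e_prim) = 1` and `π_d(e_prim) = 0` for every proper divisor `d` of `m`. -/
theorem primIdem_image_under_cyclotomic_projections
    (S : Type*) [CommRing S] [Nontrivial S] (ρ : Type*) [CommGroup ρ] [Fintype ρ]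
    (m : ℕ) (hm : 0 < m) (hcard : Fintype.card ρ = m) (hu : IsUnit (m : S))
    (t : ρ) (ht : ∀ g : ρ, g ∈ Subgroup.zpowers t) :
    ∀ d ∈ m.divisors,
      (∃! π : MonoidAlgebra S ρ →ₐ[S] S[X] ⧸ Ideal.span {cyclotomic d S},
          π (MonoidAlgebra.of S ρ t) = Ideal.Quotient.mk (Ideal.span {cyclotomic d S}) X) ∧
      ∀ π : MonoidAlgebra S ρ →ₐ[S] S[X] ⧸ Ideal.span {cyclotomic d S},
        π (MonoidAlgebra.of S ρ t) = Ideal.Quotient.mk (Ideal.span {cyclotomic d S}) X →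
        π (primIdem S m t) = if d = m then 1 else 0 := by
  intro d hd
  obtain ⟨hdvd, hm0⟩ := Nat.mem_divisors.mp hd
  set I : Ideal S[X] := Ideal.span {cyclotomic d S} with hI
  set Q := S[X] ⧸ I
  set mk : S[X] →+* Q := Ideal.Quotient.mk I with hmk
  have hordt : orderOf t = m := by
    rw [orderOf_eq_card_of_forall_mem_zpowers ht, Nat.card_eq_fintype_card, hcard]
  have hd0 : 0 < d := Nat.pos_of_dvd_of_pos hdvd hm
  -- powers of the class of X
  have hxpow : ∀ k : ℕ, d ∣ k → (mk X) ^ k = 1 := by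
    intro k hk
    obtain ⟨c, rfl⟩ := hk
    have h1 : cyclotomic d S ∣ (X : S[X]) ^ d - 1 := by
      rw [← prod_cyclotomic_eq_X_pow_sub_one hd0 S]
      exact Finset.dvd_prod_of_mem _ (Nat.mem_divisors_self d hd0.ne')
    have h2 : (X : S[X]) ^ d - 1 ∣ (X : S[X]) ^ (d * c) - 1 := by
      have := sub_dvd_pow_sub_pow ((X : S[X]) ^ d) 1 c
      rwa [one_pow, ← pow_mul] at this
    have h3 : mk ((X : S[X]) ^ (d * c) - 1) = 0 :=
      Ideal.Quotient.eq_zero_iff_mem.mpr (Ideal.mem_span_singleton.mpr (h1.trans h2))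
    rw [map_sub, map_pow, map_one, sub_eq_zero] at h3
    exact h3
  have hxm : (mk X) ^ m = 1 := hxpow m hdvd
  -- `mk X` is a unit
  have hxu : mk X * (mk X) ^ (m - 1) = 1 := by
    rw [← pow_succ', Nat.sub_add_cancel hm, hxm]
  obtain ⟨u, hu_eq⟩ : IsUnit (mk X) := IsUnit.of_mul_eq_one _ hxu
  have hum : u ^ m = 1 := by
    ext
    rw [Units.val_pow_eq_pow_val, hu_eq, hxm, Units.val_one]
  -- construct the monoid hom ρ →* Qˣ sending t to u
  set φ : Multiplicative ℤ →* ρ := zpowersHom ρ t with hφ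
  set ψ : Multiplicative ℤ →* Qˣ := zpowersHom Qˣ u with hψ
  have hφsurj : Function.Surjective φ := by
    intro g
    obtain ⟨k, hk⟩ := ht g
    exact ⟨Multiplicative.ofAdd k, hk⟩
  have hker : φ.ker ≤ ψ.ker := by
    intro k hk
    have ht1 : t ^ k.toAdd = 1 := hk
    have hdk : (m : ℤ) ∣ k.toAdd := by
      rw [← hordt]
      exact orderOf_dvd_iff_zpow_eq_one.mpr ht1
    obtain ⟨c, hc⟩ := hdk
    show u ^ k.toAdd = 1
    rw [hc, zpow_mul, zpow_natCast, hum, one_zpow]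
  set e := QuotientGroup.quotientKerEquivOfSurjective φ hφsurj with he
  have HN : ∀ x ∈ φ.ker, ψ x = 1 := fun g hg => hker hg
  set f : ρ →* Qˣ := (QuotientGroup.lift φ.ker ψ HN).comp e.symm.toMonoidHom with hf
  have hfφ : ∀ k : Multiplicative ℤ, f (φ k) = ψ k := by
    intro k
    have h1 : e (QuotientGroup.mk k) = φ k := rfl
    show (QuotientGroup.lift φ.ker ψ HN) (e.symm (φ k)) = ψ k
    rw [← h1, MulEquiv.symm_apply_apply]
    rfl
  have hft : f t = u := by
    have h := hfφ (Multiplicative.ofAdd 1)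
    rw [hφ, hψ] at h
    simpa [zpowersHom_apply] using h
  set F : ρ →* Q := (Units.coeHom Q).comp f with hF
  set π₀ : MonoidAlgebra S ρ →ₐ[S] Q := MonoidAlgebra.lift S Q ρ F with hπ₀def
  have hπ₀ : π₀ (MonoidAlgebra.of S ρ t) = mk X := by
    rw [hπ₀def, MonoidAlgebra.lift_of, hF]
    simp [hft, hu_eq]
  -- uniqueness
  have huniq : ∀ π : MonoidAlgebra S ρ →ₐ[S] Q,
      π (MonoidAlgebra.of S ρ t) = mk X → π = π₀ := by
    intro π hπ
    refine MonoidAlgebra.algHom_ext ?_ (Subsingleton.elim _ _)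
    intro g
    obtain ⟨k, hk⟩ := (Submonoid.mem_powers_iff g t).mp (mem_powers_iff_mem_zpowers.mpr (ht g))
    subst hk
    simp only [← MonoidAlgebra.of_apply]
    rw [map_pow (MonoidAlgebra.of S ρ), map_pow, map_pow, hπ, hπ₀]
  refine ⟨⟨π₀, hπ₀, huniq⟩, ?_⟩
  intro π hπ
  -- image of the averaging idempotents
  have havg : ∀ p ∈ m.primeFactors,
      π (avgIdem S (Subgroup.zpowers (t ^ (m / p))))
        = Ring.inverse ((p : S)) • ∑ j ∈ Finset.range p, ((mk X) ^ (m / p)) ^ j := by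
    intro p hp
    obtain ⟨hpp, hpm, -⟩ := Nat.mem_primeFactors.mp hp
    set s := t ^ (m / p) with hs
    have hords : orderOf s = p := by
      rw [hs, orderOf_pow, hordt, Nat.gcd_eq_right (Nat.div_dvd_of_dvd hpm),
        Nat.div_div_self hpm hm0]
    have hcards : Nat.card (Subgroup.zpowers s) = p := by
      rw [Nat.card_zpowers, hords]
    have hofs : π (MonoidAlgebra.of S ρ s) = (mk X) ^ (m / p) := by
      rw [hs, map_pow (MonoidAlgebra.of S ρ), map_pow, hπ]
    haveI : Fintype ↥(Subgroup.zpowers s) := Fintype.ofFinite _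
    have hsum : (∑ h : ↥(Subgroup.zpowers s), π (MonoidAlgebra.of S ρ (h : ρ)))
        = ∑ j ∈ Finset.range p, ((mk X) ^ (m / p)) ^ j := by
      rw [← Fin.sum_univ_eq_sum_range (fun j => ((mk X) ^ (m / p)) ^ j) p]
      refine (Fintype.sum_equiv
        ((finCongr hords.symm).trans (finEquivZPowers (isOfFinOrder_of_finite s)))
        (fun j : Fin p => ((mk X) ^ (m / p)) ^ (j : ℕ))
        (fun h => π (MonoidAlgebra.of S ρ (h : ρ))) (fun j => ?_)).symm
      show ((mk X) ^ (m / p)) ^ (j : ℕ) = π (MonoidAlgebra.of S ρ (s ^ (j : ℕ)))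
      rw [map_pow (MonoidAlgebra.of S ρ), map_pow, hofs]
    unfold avgIdem
    rw [map_smul, hcards, map_sum]
    congr 1
    convert hsum using 2
    exact congrArg (fun i => @Finset.univ _ i) (Subsingleton.elim _ _)
  rw [primIdem, map_prod]
  by_cases hdm : d = m
  · subst hdm
    rw [if_pos rfl]
    apply Finset.prod_eq_one
    intro p hp
    obtain ⟨hpp, hpm, -⟩ := Nat.mem_primeFactors.mp hp
    rw [map_sub, map_one, havg p hp]
    have hzero : ∑ j ∈ Finset.range p, ((mk X) ^ (d / p)) ^ j = 0 := by
      have h1 : (∑ j ∈ Finset.range p, ((mk X) ^ (d / p)) ^ j)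
          = mk (∑ j ∈ Finset.range p, ((X : S[X]) ^ (d / p)) ^ j) := by
        rw [map_sum]
        simp [map_pow]
      rw [h1]
      exact Ideal.Quotient.eq_zero_iff_mem.mpr (Ideal.mem_span_singleton.mpr
        (aux_cyclotomic_dvd_geom_sum_pow S hm hpp hpm))
    rw [hzero, smul_zero, sub_zero]
  · rw [if_neg hdm]
    set p := (m / d).minFac with hpdef
    have hmd1 : m / d ≠ 1 := by
      intro h
      exact hdm ((Nat.eq_mul_of_div_eq_right hdvd h).trans (mul_one d)).symm
    have hpp : p.Prime := Nat.minFac_prime hmd1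
    have hpd : p ∣ m / d := Nat.minFac_dvd _
    have hpm : p ∣ m := hpd.trans (Nat.div_dvd_of_dvd hdvd)
    have hpmem : p ∈ m.primeFactors := Nat.mem_primeFactors.mpr ⟨hpp, hpm, hm0⟩
    apply Finset.prod_eq_zero hpmem
    rw [map_sub, map_one, havg p hpmem]
    obtain ⟨c, hc⟩ := hpd
    have hmeq : m = p * (d * c) := by
      have h1 : m = d * (m / d) := (Nat.div_mul_cancel hdvd).symm.trans (mul_comm _ _)
      rw [h1, hc]; ring
    have hmp : m / p = d * c := by rw [hmeq, Nat.mul_div_cancel_left _ hpp.pos]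
    have hx1 : (mk X) ^ (m / p) = 1 := by
      rw [hmp]; exact hxpow (d * c) ⟨c, rfl⟩
    rw [hx1]
    simp only [one_pow, Finset.sum_const, Finset.card_range]
    have hpu : IsUnit ((p : S)) := isUnit_of_dvd_unit (Nat.cast_dvd_cast hpm) hu
    have h2 : Ring.inverse ((p : S)) • ((p : ℕ) • (1 : Q)) = 1 := by
      rw [nsmul_eq_mul, mul_one, ← map_natCast (algebraMap S Q) p,
        Algebra.algebraMap_eq_smul_one, smul_smul, Ring.inverse_mul_cancel _ hpu, one_smul]
    rw [h2, sub_self]
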